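/- Let (W,S) be a finite Coxeter system, r,s ∈ S with m = m(r,s) ≥ 3, and let γ ∈ W_{r,s} have a reduced word of the form srs··· with 2 ≤ l(γ) ≤ m−1 (so γ is a join-irreducible of degree two). Then γ' := γ∗ · (w₀)_{{r,s}} is a join-irreducible with reduced word of the form rsr··· and length l(γ') = m − l(γ) + 1, where γ∗ is the unique element covered by γ in weak order and (w₀)_{{r,s}} is the longest element of W_{{r,s}}. -/

import Mathlib

def weakStep {B W : Type*} [Group W] {M : CoxeterMatrix B} (cs : CoxeterSystem M W)
    (u w : W) : Prop :=
  ∃ i : B, w = u * cs.simple i ∧ cs.length w = cs.length u + 1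

/-- The right weak order on a Coxeter group. -/
def weakLE {B W : Type*} [Group W] {M : CoxeterMatrix B} (cs : CoxeterSystem M W) :
    W → W → Prop :=
  Relation.ReflTransGen (weakStep cs)

/-- Cover relation of the right weak order. -/
def weakCov {B W : Type*} [Group W] {M : CoxeterMatrix B} (cs : CoxeterSystem M W)
    (u w : W) : Prop :=
  weakLE cs u w ∧ u ≠ w ∧ ∀ v : W, weakLE cs u v → weakLE cs v w → v = u ∨ v = w

/-- The alternating word `aba⋯` of length `l`, starting with `a`. -/
def altWord {B : Type*} (a b : B) (l : ℕ) : List B :=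
  (List.range l).map (fun k => if k % 2 = 0 then a else b)

namespace StmtTen

open Real List



variable {B : Type*} (M : CoxeterMatrix B)

noncomputable def kent (i j : B) : ℝ := -Real.cos (Real.pi / M.M i j)

noncomputable def phi (i : B) : (B →₀ ℝ) →ₗ[ℝ] ℝ :=
  Finsupp.linearCombination ℝ (kent M i)

lemma phi_single (i j : B) : phi M i (Finsupp.single j 1) = kent M i j := by
  simp [phi]

lemma kent_self (i : B) : kent M i i = 1 := by
  simp [kent, M.diagonal i]

noncomputable def sigma (i : B) : (B →₀ ℝ) →ₗ[ℝ] (B →₀ ℝ) :=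
  LinearMap.id - (2 : ℝ) • ((phi M i).smulRight (Finsupp.single i 1))

lemma sigma_apply (i : B) (v : B →₀ ℝ) :
    sigma M i v = v - (2 * phi M i v) • Finsupp.single i 1 := by
  simp [sigma, two_smul, smul_smul, two_mul]

lemma phi_self_single (i : B) : phi M i (Finsupp.single i 1) = 1 := by
  rw [phi_single, kent_self]

lemma sigma_invol (i : B) (v : B →₀ ℝ) : sigma M i (sigma M i v) = v := by
  rw [sigma_apply, sigma_apply, map_sub, map_smul, phi_self_single]
  rw [smul_eq_mul, mul_one]
  rw [mul_sub]
  module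

noncomputable def reflEquiv (i : B) : (B →₀ ℝ) ≃ₗ[ℝ] (B →₀ ℝ) :=
  LinearEquiv.ofLinear (sigma M i) (sigma M i)
    (LinearMap.ext fun w => sigma_invol M i w) (LinearMap.ext fun w => sigma_invol M i w)

lemma reflEquiv_apply (i : B) (v : B →₀ ℝ) : reflEquiv M i v = sigma M i v := rfl



section Trig
variable {m : ℕ}

noncomputable def theta (m : ℕ) : ℝ := Real.pi / m
noncomputable def useq (m : ℕ) (n : ℕ) : ℝ := Real.sin (n * theta m) / Real.sin (theta m)

lemma theta_pos (hm : 2 ≤ m) : 0 < theta m := by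
  have h : (0:ℝ) < m := by exact_mod_cast Nat.lt_of_lt_of_le (by norm_num) hm
  exact div_pos Real.pi_pos h

lemma theta_le (hm : 2 ≤ m) : theta m ≤ Real.pi / 2 := by
  have h2 : (2:ℝ) ≤ m := by exact_mod_cast hm
  exact div_le_div_of_nonneg_left Real.pi_pos.le (by norm_num) h2
    |>.trans_eq rfl

lemma sin_theta_pos (hm : 2 ≤ m) : 0 < Real.sin (theta m) := by
  apply Real.sin_pos_of_pos_of_lt_pi (theta_pos hm)
  calc theta m ≤ Real.pi / 2 := theta_le hm
    _ < Real.pi := by linarith [Real.pi_pos]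

lemma useq_zero : useq m 0 = 0 := by simp [useq]

lemma useq_one (hm : 2 ≤ m) : useq m 1 = 1 := by
  rw [useq]; rw [Nat.cast_one, one_mul, div_self (sin_theta_pos hm).ne']

lemma useq_rec (n : ℕ) :
    useq m (n + 2) = 2 * Real.cos (theta m) * useq m (n + 1) - useq m n := by
  unfold useq
  have h1 : ((n:ℝ) + 2) * theta m = ((n:ℝ) + 1) * theta m + theta m := by ring
  have h2 : (n:ℝ) * theta m = ((n:ℝ) + 1) * theta m - theta m := by ring
  push_cast
  rw [h1, h2, Real.sin_add, Real.sin_sub]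
  ring

lemma m_theta (hm : 2 ≤ m) : (m : ℝ) * theta m = Real.pi := by
  have h : (m:ℝ) ≠ 0 := by
    have : (0:ℝ) < m := by exact_mod_cast Nat.lt_of_lt_of_le (by norm_num) hm
    exact this.ne'
  rw [theta, mul_div_cancel₀ _ h]

lemma useq_two_m (hm : 2 ≤ m) : useq m (2 * m) = 0 := by
  unfold useq
  have : ((2 * m : ℕ) : ℝ) * theta m = 2 * Real.pi := by
    push_cast; rw [mul_assoc, m_theta hm]
  rw [this, Real.sin_two_pi, zero_div]

lemma useq_two_m_add_one (hm : 2 ≤ m) : useq m (2 * m + 1) = 1 := by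
  unfold useq
  have : ((2 * m + 1 : ℕ) : ℝ) * theta m = theta m + 2 * Real.pi := by
    push_cast; rw [add_mul, mul_assoc, m_theta hm]; ring
  rw [this, Real.sin_add_two_pi, div_self (sin_theta_pos hm).ne']

lemma useq_ne_zero_or (hm : 2 ≤ m) {t : ℕ} (ht0 : 0 < t) (htm : t < m) :
    useq m (2 * t) ≠ 0 ∨ useq m (2 * t + 1) = -1 := by
  rcases eq_or_ne (2 * t) m with h | h
  · right
    unfold useq
    have : ((2 * t + 1 : ℕ) : ℝ) * theta m = Real.pi + theta m := by
      push_cast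
      rw [add_mul, one_mul, ← Nat.cast_ofNat, ← Nat.cast_mul, h, m_theta hm]
    rw [this]
    have : Real.sin (Real.pi + theta m) = -Real.sin (theta m) := by
      rw [Real.sin_add]; simp
    rw [this, neg_div, div_self (sin_theta_pos hm).ne']
  · left
    unfold useq
    apply div_ne_zero _ (sin_theta_pos hm).ne'
    have hpos : (0:ℝ) < (2 * t : ℕ) * theta m := by
      have := theta_pos hm
      have : (0:ℝ) < (2 * t : ℕ) := by positivity
      positivity
    have hlt : ((2 * t : ℕ) : ℝ) * theta m < 2 * Real.pi := by
      have h2 : ((2 * t : ℕ) : ℝ) < 2 * m := by exact_mod_cast by omega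
      have := theta_pos hm
      calc ((2 * t : ℕ) : ℝ) * theta m < (2 * m) * theta m := by
            apply mul_lt_mul_of_pos_right h2 this
        _ = 2 * Real.pi := by rw [mul_assoc, m_theta hm]
    have hne : ((2 * t : ℕ) : ℝ) * theta m ≠ Real.pi := by
      intro hcon
      apply h
      have hmne : theta m ≠ 0 := (theta_pos hm).ne'
      have : ((2 * t : ℕ) : ℝ) * theta m = (m : ℝ) * theta m := by rw [hcon, m_theta hm]
      have := mul_right_cancel₀ hmne this
      exact_mod_cast this
    intro hsin
    rcases Real.sin_eq_zero_iff.mp hsin with ⟨n, hn⟩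
    have hn0 : (0:ℝ) < n * Real.pi := hn ▸ hpos
    have hn2 : (n:ℝ) * Real.pi < 2 * Real.pi := hn ▸ hlt
    have hnp : 0 < n := by
      by_contra hcon
      push_neg at hcon
      have : (n:ℝ) * Real.pi ≤ 0 := by
        apply mul_nonpos_of_nonpos_of_nonneg _ Real.pi_pos.le
        exact_mod_cast hcon
      linarith
    have hn2' : n < 2 := by
      by_contra hcon
      push_neg at hcon
      have : (2:ℝ) * Real.pi ≤ (n:ℝ) * Real.pi := by
        apply mul_le_mul_of_nonneg_right _ Real.pi_pos.le
        exact_mod_cast hcon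
      linarith
    interval_cases n
    push_cast at hn hne ⊢
    exact hne (by linarith)

end Trig

section Dihedral

variable {B : Type*} {M : CoxeterMatrix B} {i j : B}

lemma sigma_single_self (M : CoxeterMatrix B) (i : B) :
    sigma M i (Finsupp.single i 1) = -(Finsupp.single i 1) := by
  rw [sigma_apply, phi_self_single]
  module

lemma kent_eq_neg_cos (M : CoxeterMatrix B) (i j : B) :
    kent M i j = -Real.cos (theta (M.M i j)) := rfl

variable (hij : i ≠ j)

local notation "m'" => M.M i j
local notation "c" => Real.cos (theta (M.M i j))
local notation "u" => useq (M.M i j)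
local notation "e" a => Finsupp.single a (1:ℝ)
local notation "A" => reflEquiv M i * reflEquiv M j

lemma phi_single_ne : phi M i (Finsupp.single j 1) = -c := by
  rw [phi_single, kent_eq_neg_cos]

lemma phi_single_ne' : phi M j (Finsupp.single i 1) = -c := by
  rw [phi_single, kent_eq_neg_cos, M.symmetric j i]

lemma sigma_single_ne : sigma M i (Finsupp.single j 1) =
    Finsupp.single j 1 + (2 * c) • Finsupp.single i 1 := by
  rw [sigma_apply, phi_single_ne]
  module

lemma sigma_single_ne' : sigma M j (Finsupp.single i 1) =
    Finsupp.single i 1 + (2 * c) • Finsupp.single j 1 := by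
  rw [sigma_apply, phi_single_ne']
  module

lemma A_single_i : (reflEquiv M i * reflEquiv M j) (e i) =
    (4 * c * c - 1) • (e i) + (2 * c) • (e j) := by
  show reflEquiv M i (reflEquiv M j (e i)) = _
  rw [reflEquiv_apply, reflEquiv_apply, sigma_single_ne', map_add, map_smul,
    sigma_single_self, sigma_single_ne]
  module

lemma A_single_j : (reflEquiv M i * reflEquiv M j) (e j) =
    (-(2 * c)) • (e i) + (-1 : ℝ) • (e j) := by
  show reflEquiv M i (reflEquiv M j (e j)) = _
  rw [reflEquiv_apply, reflEquiv_apply, sigma_single_self, map_neg, sigma_single_ne]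
  module

lemma A_pow_single (hm : 2 ≤ m') (n : ℕ) :
    ((reflEquiv M i * reflEquiv M j) ^ n) (e i) = u (2*n+1) • (e i) + u (2*n) • (e j) ∧
    ((reflEquiv M i * reflEquiv M j) ^ n) (e j) =
      (-(u (2*n))) • (e i) + (u (2*n+1) - 2 * c * u (2*n)) • (e j) := by
  induction n with
  | zero =>
    rw [pow_zero]
    constructor
    · show (e i) = u 1 • (e i) + u 0 • (e j)
      rw [useq_one hm, useq_zero]; module
    · show (e j) = (-(u 0)) • (e i) + (u 1 - 2 * c * u 0) • (e j)
      rw [useq_one hm, useq_zero]; module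
  | succ n ih =>
    obtain ⟨ih1, ih2⟩ := ih
    have hstep : ∀ v : B →₀ ℝ, ((reflEquiv M i * reflEquiv M j) ^ (n+1)) v =
        (reflEquiv M i * reflEquiv M j) (((reflEquiv M i * reflEquiv M j) ^ n) v) := by
      intro v; rw [pow_succ']; rfl
    have r1 : u (2*n+2) = 2 * c * u (2*n+1) - u (2*n) := useq_rec (2*n)
    have r2 : u (2*n+3) = 2 * c * u (2*n+2) - u (2*n+1) := useq_rec (2*n+1)
    constructor
    · rw [hstep, ih1, map_add, map_smul, map_smul, A_single_i, A_single_j]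
      have h1 : (2*(n+1)+1) = 2*n+3 := by ring
      have h2 : (2*(n+1)) = 2*n+2 := by ring
      rw [h1, h2, r2, r1]
      module
    · rw [hstep, ih2, map_add, map_smul, map_smul, A_single_i, A_single_j]
      have h1 : (2*(n+1)+1) = 2*n+3 := by ring
      have h2 : (2*(n+1)) = 2*n+2 := by ring
      rw [h1, h2, r2, r1]
      module

lemma A_fix (v : B →₀ ℝ) (h1 : phi M i v = 0) (h2 : phi M j v = 0) :
    (reflEquiv M i * reflEquiv M j) v = v := by
  show reflEquiv M i (reflEquiv M j v) = v
  rw [reflEquiv_apply, reflEquiv_apply, sigma_apply M j v, h2]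
  simp only [mul_zero, zero_smul, sub_zero]
  rw [sigma_apply, h1]
  simp

lemma cos_sq_lt_one (hm : 2 ≤ m') : c ^ 2 < 1 := by
  nlinarith [Real.sin_sq_add_cos_sq (theta m'), sin_theta_pos hm]

include hij in
lemma A_pow_m (hm : 2 ≤ m') : (reflEquiv M i * reflEquiv M j) ^ m' = 1 := by
  have hAfixpow : ∀ (n : ℕ) (v : B →₀ ℝ), phi M i v = 0 → phi M j v = 0 →
      ((reflEquiv M i * reflEquiv M j) ^ n) v = v := by
    intro n
    induction n with
    | zero => intro v _ _; rfl
    | succ n ih =>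
      intro v h1 h2
      have : ((reflEquiv M i * reflEquiv M j) ^ (n+1)) v =
          (reflEquiv M i * reflEquiv M j) (((reflEquiv M i * reflEquiv M j) ^ n) v) := by
        rw [pow_succ']; rfl
      rw [this, ih v h1 h2, A_fix v h1 h2]
  refine LinearEquiv.ext fun v => ?_
  show ((reflEquiv M i * reflEquiv M j) ^ m') v = v
  -- decompose v
  have hc2 : (1 : ℝ) - c ^ 2 ≠ 0 := by
    have := cos_sq_lt_one (M := M) (i := i) (j := j) hm
    linarith
  set a := (phi M i v + c * phi M j v) / (1 - c ^ 2) with ha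
  set b := (phi M j v + c * phi M i v) / (1 - c ^ 2) with hb
  set w := v - a • (e i) - b • (e j) with hw
  have hwi : phi M i w = 0 := by
    rw [hw]
    simp only [map_sub, map_smul, phi_self_single, phi_single_ne, smul_eq_mul]
    rw [ha, hb]
    field_simp
    ring
  have hwj : phi M j w = 0 := by
    rw [hw]
    simp only [map_sub, map_smul, phi_self_single, phi_single_ne', smul_eq_mul]
    rw [ha, hb]
    field_simp
    ring
  have hv : v = a • (e i) + b • (e j) + w := by rw [hw]; module
  obtain ⟨hei, hej⟩ := A_pow_single (M := M) (i := i) (j := j) hm m'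
  rw [hv, map_add, map_add, map_smul, map_smul, hAfixpow _ w hwi hwj, hei, hej,
      useq_two_m hm, useq_two_m_add_one hm]
  module

lemma liftable_reflEquiv (M : CoxeterMatrix B) :
    M.IsLiftable (fun i => reflEquiv M i) := by
  intro i i'
  rcases eq_or_ne i i' with rfl | hne
  · rw [M.diagonal, pow_one]
    refine LinearEquiv.ext fun v => ?_
    show reflEquiv M i (reflEquiv M i v) = v
    rw [reflEquiv_apply, reflEquiv_apply, sigma_invol]
  · rcases Nat.lt_or_ge (M.M i i') 2 with hlt | hge
    · interval_cases h : M.M i i'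
      · rw [pow_zero]
      · exact absurd h (M.off_diagonal i i' hne)
    · exact A_pow_m hne hge

include hij in
lemma A_pow_ne_one (hm : 2 ≤ m') {t : ℕ} (ht0 : 0 < t) (htm : t < m') :
    (reflEquiv M i * reflEquiv M j) ^ t ≠ 1 := by
  classical
  intro hcon
  obtain ⟨hei, _⟩ := A_pow_single (M := M) (i := i) (j := j) hm t
  rw [hcon] at hei
  have hej0 : ((e i) : B →₀ ℝ) j = 0 := by
    rw [Finsupp.single_apply, if_neg hij]
  have hji : (u (2*t+1) • (e i) + u (2*t) • (e j) : B →₀ ℝ) j = u (2*t) := by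
    simp [Finsupp.single_apply, if_neg hij]
  have hii : (u (2*t+1) • (e i) + u (2*t) • (e j) : B →₀ ℝ) i = u (2*t+1) := by
    simp [Finsupp.single_apply, if_neg (Ne.symm hij)]
  have h1 : ((1 : (B →₀ ℝ) ≃ₗ[ℝ] (B →₀ ℝ))) (e i) = (e i) := rfl
  rw [h1] at hei
  have hu2t : u (2*t) = 0 := by rw [← hji, ← hei, hej0]
  have hu2t1 : u (2*t+1) = 1 := by
    rw [← hii, ← hei, Finsupp.single_apply, if_pos rfl]
  rcases useq_ne_zero_or hm ht0 htm with h | h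
  · exact h hu2t
  · rw [hu2t1] at h; norm_num at h

end Dihedral

section Exactness

variable {B W : Type*} [Group W] {M : CoxeterMatrix B} (cs : CoxeterSystem M W)

theorem pow_simple_mul_simple_ne_one {i j : B} (hij : i ≠ j) {t : ℕ} (ht0 : 0 < t)
    (htm : t < M.M i j) : (cs.simple i * cs.simple j) ^ t ≠ 1 := by
  intro hcon
  have hm : 2 ≤ M.M i j := by omega
  set ψ := cs.lift ⟨fun i => reflEquiv M i, liftable_reflEquiv M⟩ with hψ
  have h1 : ψ (cs.simple i) = reflEquiv M i := cs.lift_apply_simple _ i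
  have h2 : ψ (cs.simple j) = reflEquiv M j := cs.lift_apply_simple _ j
  have := congrArg ψ hcon
  rw [map_pow, map_mul, h1, h2, map_one] at this
  exact A_pow_ne_one hij hm ht0 htm this

end Exactness

section Perm

attribute [local instance] Classical.propDecidable

variable {B W : Type*} [Group W] {M : CoxeterMatrix B} (cs : CoxeterSystem M W)

/-- The function underlying the Tits sign permutation of a generator. -/
noncomputable def etaFun (i : B) : W × ℤˣ → W × ℤˣ :=
  fun p => (cs.simple i * p.1 * cs.simple i, if p.1 = cs.simple i then -p.2 else p.2)

lemma etaFun_invol (i : B) : Function.Involutive (etaFun cs i) := by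
  rintro ⟨w, ε⟩
  by_cases h : w = cs.simple i
  · subst h
    simp [etaFun, cs.simple_mul_simple_self, mul_assoc, cs.simple_mul_simple_cancel_left]
  · have h2 : cs.simple i * w * cs.simple i ≠ cs.simple i := by
      intro hcon
      apply h
      have := congrArg (fun x => cs.simple i * x * cs.simple i) hcon
      calc w = (cs.simple i * cs.simple i) * w * (cs.simple i * cs.simple i) := by
            rw [cs.simple_mul_simple_self]; group
        _ = cs.simple i * (cs.simple i * w * cs.simple i) * cs.simple i := by group
        _ = cs.simple i * cs.simple i * cs.simple i := by rw [hcon]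
        _ = cs.simple i := by rw [cs.simple_mul_simple_self, one_mul]
    simp only [etaFun, if_neg h, if_neg h2, Prod.mk.injEq]
    refine ⟨?_, trivial⟩
    calc cs.simple i * (cs.simple i * w * cs.simple i) * cs.simple i
        = (cs.simple i * cs.simple i) * w * (cs.simple i * cs.simple i) := by group
      _ = w := by rw [cs.simple_mul_simple_self]; group

/-- The Tits sign permutation attached to a generator. -/
noncomputable def eta (i : B) : Equiv.Perm (W × ℤˣ) :=
  Function.Involutive.toPerm (etaFun cs i) (etaFun_invol cs i)

lemma eta_apply (i : B) (w : W) (ε : ℤˣ) :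
    eta cs i (w, ε) = (cs.simple i * w * cs.simple i, if w = cs.simple i then -ε else ε) := rfl

lemma simple_pow_comm (i j : B) (a : ℕ) :
    cs.simple j * (cs.simple i * cs.simple j) ^ a
      = (cs.simple j * cs.simple i) ^ a * cs.simple j := by
  induction a with
  | zero => simp
  | succ n ih =>
    calc cs.simple j * (cs.simple i * cs.simple j) ^ (n+1)
        = (cs.simple j * (cs.simple i * cs.simple j) ^ n) * (cs.simple i * cs.simple j) := by
          rw [pow_succ]; group
      _ = ((cs.simple j * cs.simple i) ^ n * cs.simple j) * (cs.simple i * cs.simple j) := by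
          rw [ih]
      _ = ((cs.simple j * cs.simple i) ^ n * (cs.simple j * cs.simple i)) * cs.simple j := by
          group
      _ = (cs.simple j * cs.simple i) ^ (n + 1) * cs.simple j := by rw [← pow_succ]

lemma zi_mul_z (i j : B) (a : ℕ) :
    (cs.simple j * cs.simple i) ^ a * ((cs.simple i * cs.simple j) ^ a) = 1 := by
  have : (cs.simple j * cs.simple i) = (cs.simple i * cs.simple j)⁻¹ := by
    rw [mul_inv_rev, cs.inv_simple, cs.inv_simple]
  rw [this, inv_pow, inv_mul_cancel]

/-- Sign factor of one application of `eta i * eta j`. -/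
noncomputable def gsign (i j : B) (w : W) : ℤˣ :=
  (if cs.simple j * w * cs.simple j = cs.simple i then -1 else 1) *
    (if w = cs.simple j then -1 else 1)

lemma eta_mul_apply (i j : B) (w : W) (ε : ℤˣ) :
    (eta cs i * eta cs j) (w, ε) =
      ((cs.simple i * cs.simple j) * w * (cs.simple j * cs.simple i), gsign cs i j w * ε) := by
  show eta cs i (eta cs j (w, ε)) = _
  rw [eta_apply, eta_apply, gsign]
  congr 1
  · group
  · split_ifs <;> simp

lemma eta_mul_pow_apply (i j : B) (n : ℕ) (w : W) (ε : ℤˣ) :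
    ((eta cs i * eta cs j) ^ n) (w, ε) =
      ((cs.simple i * cs.simple j) ^ n * w * (cs.simple j * cs.simple i) ^ n,
        (∏ a ∈ Finset.range n, gsign cs i j
          ((cs.simple i * cs.simple j) ^ a * w * (cs.simple j * cs.simple i) ^ a)) * ε) := by
  induction n with
  | zero => simp
  | succ n ih =>
    have hstep : ((eta cs i * eta cs j) ^ (n+1)) (w, ε)
        = (eta cs i * eta cs j) (((eta cs i * eta cs j) ^ n) (w, ε)) := by
      rw [pow_succ']; rfl
    rw [hstep, ih, eta_mul_apply, Finset.prod_range_succ]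
    simp only [Prod.mk.injEq]
    constructor
    · rw [pow_succ' (cs.simple i * cs.simple j), pow_succ (cs.simple j * cs.simple i)]
      simp only [mul_assoc]
    · rw [← mul_assoc, mul_comm (gsign _ _ _ _)]

lemma gsign_conj_eq (i j : B) (a : ℕ) (w : W) :
    gsign cs i j ((cs.simple i * cs.simple j) ^ a * w * (cs.simple j * cs.simple i) ^ a) =
      (if w = (cs.simple j * cs.simple i) ^ (2*a) * cs.simple j then -1 else 1) *
      (if w = (cs.simple j * cs.simple i) ^ (2*a+1) * cs.simple j then -1 else 1) := by
  set x := cs.simple i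
  set y := cs.simple j
  set z := x * y with hz
  set zi := y * x with hzi
  have hziz : zi = z⁻¹ := by rw [hzi, hz, mul_inv_rev, cs.inv_simple, cs.inv_simple]
  have hzz1 : zi ^ a * z ^ a = 1 := by rw [hziz, inv_pow, inv_mul_cancel]
  have hzz2 : z ^ a * zi ^ a = 1 := by rw [hziz, inv_pow, mul_inv_cancel]
  have hinv : ∀ v : W, (z ^ a * w * zi ^ a = v) ↔ (w = zi ^ a * v * z ^ a) := by
    intro v
    constructor
    · intro h
      rw [← h]
      calc w = (zi ^ a * z ^ a) * w * (zi ^ a * z ^ a) := by rw [hzz1]; group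
        _ = zi ^ a * (z ^ a * w * zi ^ a) * z ^ a := by group
    · intro h
      rw [h]
      calc z ^ a * (zi ^ a * v * z ^ a) * zi ^ a
          = (z ^ a * zi ^ a) * v * (z ^ a * zi ^ a) := by group
        _ = v := by rw [hzz2]; group
  have key1 : zi ^ a * y * z ^ a = zi ^ (2*a) * y := by
    have : y * z ^ a = zi ^ a * y := simple_pow_comm cs i j a
    rw [mul_assoc, this, ← mul_assoc, ← pow_add, two_mul]
  have key2 : zi ^ a * (y * x * y) * z ^ a = zi ^ (2*a+1) * y := by
    have h1 : y * x * y = zi * y := by rw [hzi]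
    have h2 : y * z ^ a = zi ^ a * y := simple_pow_comm cs i j a
    have e1 : zi ^ a * zi * zi ^ a = zi ^ (2*a+1) := by
      rw [← pow_succ, ← pow_add]
      congr 1
      omega
    calc zi ^ a * (y * x * y) * z ^ a = zi ^ a * zi * (y * z ^ a) := by rw [h1]; group
      _ = zi ^ a * zi * (zi ^ a * y) := by rw [h2]
      _ = (zi ^ a * zi * zi ^ a) * y := by group
      _ = zi ^ (2*a+1) * y := by rw [e1]
  have c2 : (z ^ a * w * zi ^ a = y) ↔ (w = zi ^ (2*a) * y) := by
    rw [hinv y, key1]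
  have c1 : (y * (z ^ a * w * zi ^ a) * y = x) ↔ (w = zi ^ (2*a+1) * y) := by
    have : (y * (z ^ a * w * zi ^ a) * y = x) ↔ (z ^ a * w * zi ^ a = y * x * y) := by
      constructor
      · intro h
        calc z ^ a * w * zi ^ a
            = (y*y) * (z ^ a * w * zi ^ a) * (y*y) := by
              rw [cs.simple_mul_simple_self]; group
          _ = y * (y * (z ^ a * w * zi ^ a) * y) * y := by group
          _ = y * x * y := by rw [h]
      · intro h
        rw [h]
        calc y * (y * x * y) * y = (y*y) * x * (y*y) := by group
          _ = x := by rw [cs.simple_mul_simple_self]; group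
    rw [this, hinv (y * x * y), key2]
  rw [gsign, c1, c2, mul_comm]

lemma prod_pair_eq (F : ℕ → ℤˣ) (n : ℕ) :
    (∏ a ∈ Finset.range n, (F (2*a) * F (2*a+1))) = ∏ b ∈ Finset.range (2*n), F b := by
  induction n with
  | zero => simp
  | succ n ih =>
    rw [Finset.prod_range_succ, ih]
    have h : 2 * (n+1) = (2*n + 1) + 1 := by ring
    rw [h, Finset.prod_range_succ, Finset.prod_range_succ, mul_assoc]

lemma eta_liftable : M.IsLiftable (fun i => eta cs i) := by
  intro i j
  rcases eq_or_ne i j with rfl | hne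
  · rw [M.diagonal, pow_one]
    refine Equiv.ext fun p => ?_
    show eta cs i (eta cs i p) = p
    exact etaFun_invol cs i p
  · refine Equiv.ext fun p => ?_
    obtain ⟨w, ε⟩ := p
    rw [eta_mul_pow_apply]
    have hz : (cs.simple i * cs.simple j) ^ M.M i j = 1 := cs.simple_mul_simple_pow i j
    have hzi : (cs.simple j * cs.simple i) ^ M.M i j = 1 := cs.simple_mul_simple_pow' i j
    set F : ℕ → ℤˣ := fun b =>
      if w = (cs.simple j * cs.simple i) ^ b * cs.simple j then (-1:ℤˣ) else 1 with hF
    have hsign : (∏ a ∈ Finset.range (M.M i j), gsign cs i j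
        ((cs.simple i * cs.simple j) ^ a * w * (cs.simple j * cs.simple i) ^ a)) = 1 := by
      have heq : ∀ a ∈ Finset.range (M.M i j), gsign cs i j
          ((cs.simple i * cs.simple j) ^ a * w * (cs.simple j * cs.simple i) ^ a) =
          F (2*a) * F (2*a+1) := by
        intro a _
        rw [hF]
        exact gsign_conj_eq cs i j a w
      rw [Finset.prod_congr rfl heq, prod_pair_eq F, two_mul, Finset.prod_range_add]
      have hper : ∀ b, F (M.M i j + b) = F b := by
        intro b
        rw [hF]
        simp only
        rw [pow_add, hzi, one_mul]
      rw [Finset.prod_congr rfl (fun b _ => hper b)]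
      exact Int.units_mul_self _
    rw [hz, hzi, hsign, one_mul, mul_one, one_mul]
    rfl

lemma tits_wordProd (ω : List B) (t : W) (ε : ℤˣ) :
    (cs.lift ⟨fun i => eta cs i, eta_liftable cs⟩) (cs.wordProd ω) (t, ε) =
      (cs.wordProd ω * t * (cs.wordProd ω)⁻¹,
        ((-1:ℤˣ))^((cs.rightInvSeq ω).count t) * ε) := by
  induction ω with
  | nil => simp
  | cons i ω ih =>
    have hmul : (cs.lift ⟨fun i => eta cs i, eta_liftable cs⟩) (cs.wordProd (i :: ω)) (t, ε)
        = (cs.lift ⟨fun i => eta cs i, eta_liftable cs⟩) (cs.simple i)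
          ((cs.lift ⟨fun i => eta cs i, eta_liftable cs⟩) (cs.wordProd ω) (t, ε)) := by
      rw [cs.wordProd_cons, map_mul]
      rfl
    rw [hmul, ih, cs.lift_apply_simple, eta_apply]
    have hris : cs.rightInvSeq (i :: ω)
        = ((cs.wordProd ω)⁻¹ * cs.simple i * cs.wordProd ω) :: cs.rightInvSeq ω := rfl
    have hcond : (cs.wordProd ω * t * (cs.wordProd ω)⁻¹ = cs.simple i)
        ↔ (t = (cs.wordProd ω)⁻¹ * cs.simple i * cs.wordProd ω) := by
      constructor
      · intro h
        rw [← h]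
        group
      · intro h
        rw [h]
        group
    have hfst : cs.simple i * (cs.wordProd ω * t * (cs.wordProd ω)⁻¹) * cs.simple i
        = cs.wordProd (i :: ω) * t * (cs.wordProd (i :: ω))⁻¹ := by
      rw [cs.wordProd_cons, mul_inv_rev, cs.inv_simple]
      group
    rw [hris]
    by_cases hc : cs.wordProd ω * t * (cs.wordProd ω)⁻¹ = cs.simple i
    · have ht : t = (cs.wordProd ω)⁻¹ * cs.simple i * cs.wordProd ω := hcond.mp hc
      have hcnt : (((cs.wordProd ω)⁻¹ * cs.simple i * cs.wordProd ω) :: cs.rightInvSeq ω).count t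
          = (cs.rightInvSeq ω).count t + 1 := by
        simp [List.count_cons, ht]
      rw [if_pos hc, hcnt, hfst, pow_succ]
      simp only [Prod.mk.injEq]
      refine ⟨trivial, ?_⟩
      simp [mul_neg, neg_mul]
    · have ht : t ≠ (cs.wordProd ω)⁻¹ * cs.simple i * cs.wordProd ω := fun h => hc (hcond.mpr h)
      have hcnt : (((cs.wordProd ω)⁻¹ * cs.simple i * cs.wordProd ω) :: cs.rightInvSeq ω).count t
          = (cs.rightInvSeq ω).count t := by
        simp [List.count_cons, ht, Ne.symm ht]
      rw [if_neg hc, hcnt, hfst]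

lemma count_ris_parity {ω ω' : List B} (h : cs.wordProd ω = cs.wordProd ω') (t : W) :
    ((-1:ℤˣ))^((cs.rightInvSeq ω).count t) = ((-1:ℤˣ))^((cs.rightInvSeq ω').count t) := by
  have h1 := tits_wordProd cs ω t 1
  have h2 := tits_wordProd cs ω' t 1
  rw [h] at h1
  rw [h1] at h2
  have := congrArg Prod.snd h2
  simpa using this

theorem mem_rightInvSeq_of_descent {ω : List B} (hω : cs.IsReduced ω) {i : B}
    (hd : cs.length (cs.wordProd ω * cs.simple i) < cs.length (cs.wordProd ω)) :
    cs.simple i ∈ cs.rightInvSeq ω := by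
  obtain ⟨σ, hσred, hσ⟩ := cs.exists_reduced_word' (cs.wordProd ω * cs.simple i)
  have hπ : cs.wordProd (σ.concat i) = cs.wordProd ω := by
    rw [cs.wordProd_concat, ← hσ, mul_assoc, cs.simple_mul_simple_self, mul_one]
  have hne := cs.length_mul_simple_ne (cs.wordProd ω) i
  have hlen : cs.length (cs.wordProd ω) = σ.length + 1 := by
    rcases cs.length_mul_simple (cs.wordProd ω) i with h | h
    · omega
    · have hσl : σ.length = cs.length (cs.wordProd ω * cs.simple i) := by
        rw [hσ]; exact hσred.symm
      omega
  have hred' : cs.IsReduced (σ.concat i) := by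
    show cs.length (cs.wordProd (σ.concat i)) = (σ.concat i).length
    rw [hπ, hlen, List.length_concat]
  have hmem : cs.simple i ∈ cs.rightInvSeq (σ.concat i) := by
    rw [cs.rightInvSeq_concat]
    simp
  have hcount : (cs.rightInvSeq (σ.concat i)).count (cs.simple i) = 1 :=
    List.count_eq_one_of_mem (hred'.nodup_rightInvSeq) hmem
  have hpar := count_ris_parity cs hπ (cs.simple i)
  rw [hcount] at hpar
  by_contra hnot
  rw [(List.count_eq_zero).mpr hnot] at hpar
  simp at hpar

theorem exists_reduced_sublist (ω : List B) :
    ∃ τ : List B, τ.Sublist ω ∧ cs.IsReduced τ ∧ cs.wordProd τ = cs.wordProd ω := by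
  have H : ∀ n (ω : List B), ω.length ≤ n →
      ∃ τ : List B, τ.Sublist ω ∧ cs.IsReduced τ ∧ cs.wordProd τ = cs.wordProd ω := by
    intro n
    induction n with
    | zero =>
      intro ω hlen
      have : ω = [] := List.length_eq_zero_iff.mp (Nat.le_zero.mp hlen)
      subst this
      exact ⟨[], List.Sublist.refl _, by simp [CoxeterSystem.IsReduced], rfl⟩
    | succ n ih =>
      intro ω hlen
      rcases List.eq_nil_or_concat ω with rfl | ⟨ω₁, i, rfl⟩
      · exact ⟨[], List.Sublist.refl _, by simp [CoxeterSystem.IsReduced], rfl⟩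
      · have hlen₁ : ω₁.length ≤ n := by
          rw [List.length_concat] at hlen; omega
        obtain ⟨τ₁, hsub₁, hred₁, hπ₁⟩ := ih ω₁ hlen₁
        by_cases hr : cs.IsReduced (τ₁.concat i)
        · refine ⟨τ₁.concat i, ?_, hr, ?_⟩
          · rw [List.concat_eq_append, List.concat_eq_append]
            exact List.Sublist.append hsub₁ (List.Sublist.refl _)
          · rw [cs.wordProd_concat, cs.wordProd_concat, hπ₁]
        · have hτred : cs.length (cs.wordProd τ₁) = τ₁.length := hred₁
          have hne := cs.length_mul_simple_ne (cs.wordProd τ₁) i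
          have hd : cs.length (cs.wordProd τ₁ * cs.simple i) < cs.length (cs.wordProd τ₁) := by
            rcases cs.length_mul_simple (cs.wordProd τ₁) i with h | h
            · exfalso
              apply hr
              show cs.length (cs.wordProd (τ₁.concat i)) = (τ₁.concat i).length
              rw [cs.wordProd_concat, h, hτred, List.length_concat]
            · omega
          have hmem := mem_rightInvSeq_of_descent cs hred₁ hd
          obtain ⟨j, hj, hget⟩ := List.mem_iff_getElem.mp hmem
          rw [cs.length_rightInvSeq] at hj
          have heq : cs.wordProd (τ₁.eraseIdx j) = cs.wordProd τ₁ * cs.simple i := by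
            rw [← cs.wordProd_mul_getD_rightInvSeq τ₁ j]
            congr 1
            rw [List.getD_eq_getElem _ 1 (by rw [cs.length_rightInvSeq]; exact hj)]
            exact hget
          have hlen₂ : (τ₁.eraseIdx j).length ≤ n := by
            have h1 := List.length_eraseIdx_add_one hj
            have h2 := hsub₁.length_le
            omega
          obtain ⟨τ, hsub, hred, hπ⟩ := ih (τ₁.eraseIdx j) hlen₂
          refine ⟨τ, ?_, hred, ?_⟩
          · refine ((hsub.trans (List.eraseIdx_sublist τ₁ j)).trans hsub₁).trans ?_
            rw [List.concat_eq_append]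
            exact List.sublist_append_left ω₁ [i]
          · rw [hπ, heq, hπ₁, cs.wordProd_concat]
  exact H ω.length ω le_rfl

end Perm

section AltWords

attribute [local instance] Classical.propDecidable

variable {B W : Type*} [Group W] {M : CoxeterMatrix B} (cs : CoxeterSystem M W)

lemma altWord_zero (a b : B) : altWord a b 0 = [] := rfl

lemma altWord_succ' (a b : B) (k : ℕ) :
    altWord a b (k+1) = altWord a b k ++ [if k % 2 = 0 then a else b] := by
  unfold altWord
  rw [List.range_succ, List.map_append]
  rfl

lemma altWord_length (a b : B) (k : ℕ) : (altWord a b k).length = k := by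
  simp [altWord]

lemma altWord_cons (a b : B) (k : ℕ) : altWord a b (k+1) = a :: altWord b a k := by
  unfold altWord
  rw [List.range_succ_eq_map, List.map_cons, List.map_map]
  congr 1
  apply List.map_congr_left
  intro x _
  by_cases h : x % 2 = 0
  · have h1 : (x+1) % 2 ≠ 0 := by omega
    simp [Function.comp, h, h1, Nat.succ_mod_two_eq_zero_iff]
  · have h1 : (x+1) % 2 = 0 := by omega
    simp [Function.comp, h, h1, Nat.succ_mod_two_eq_zero_iff]

lemma altWord_take (a b : B) {k j : ℕ} (h : j ≤ k) :
    (altWord a b k).take j = altWord a b j := by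
  unfold altWord
  rw [← List.map_take, List.take_range, Nat.min_eq_left h]

lemma wordProd_altWord_even (a b : B) (e : ℕ) :
    cs.wordProd (altWord a b (2*e)) = (cs.simple a * cs.simple b) ^ e := by
  induction e with
  | zero => simp [altWord_zero]
  | succ e ih =>
    have h1 : 2*(e+1) = (2*e+1)+1 := by ring
    have h2 : altWord a b (2*e+1) = altWord a b (2*e) ++ [a] := by
      rw [altWord_succ']
      congr 1
      simp [Nat.mul_mod_right]
    rw [h1, altWord_succ', h2]
    have h3 : (2*e+1) % 2 ≠ 0 := by omega
    rw [if_neg h3]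
    rw [cs.wordProd_append, cs.wordProd_append, ih]
    simp only [cs.wordProd_singleton]
    rw [pow_succ, mul_assoc]

lemma wordProd_altWord_odd (a b : B) (e : ℕ) :
    cs.wordProd (altWord a b (2*e+1)) = (cs.simple a * cs.simple b) ^ e * cs.simple a := by
  have h2 : altWord a b (2*e+1) = altWord a b (2*e) ++ [a] := by
    rw [altWord_succ']
    congr 1
    simp [Nat.mul_mod_right]
  rw [h2, cs.wordProd_append, wordProd_altWord_even, cs.wordProd_singleton]

lemma length_wordProd_mod_two (ω : List B) :
    cs.length (cs.wordProd ω) % 2 = ω.length % 2 := by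
  induction ω with
  | nil => simp
  | cons i ω ih =>
    rw [cs.wordProd_cons]
    have hne := cs.length_simple_mul_ne (cs.wordProd ω) i
    rcases cs.length_simple_mul (cs.wordProd ω) i with h | h <;>
      (simp only [List.length_cons]; omega)

lemma reduced_two_letter_alternating (a b : B) :
    ∀ (τ : List B), cs.IsReduced τ → (∀ x ∈ τ, x = a ∨ x = b) →
      τ = altWord a b τ.length ∨ τ = altWord b a τ.length := by
  intro τ
  induction τ with
  | nil => intro _ _; left; rfl
  | cons c τ' ih =>
    intro hred hmem
    have hred' : cs.IsReduced τ' := by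
      have := CoxeterSystem.IsReduced.drop (j := 1) hred
      simpa using this
    have hmem' : ∀ x ∈ τ', x = a ∨ x = b := fun x hx => hmem x (List.mem_cons_of_mem c hx)
    have hc := hmem c (List.mem_cons_self (a := c) (l := τ'))
    rcases List.eq_nil_or_concat τ' with rfl | hne
    · rcases hc with rfl | rfl
      · left; rfl
      · right; rfl
    · -- τ' nonempty
      have hτne : τ' ≠ [] := by rcases hne with ⟨l, x, rfl⟩; simp
      obtain ⟨c', rest, rfl⟩ := List.exists_cons_of_ne_nil hτne
      -- adjacent letters distinct
      have hadj : c ≠ c' := by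
        intro hcc
        subst hcc
        have hcalc : cs.wordProd (c :: c :: rest) = cs.wordProd rest := by
          rw [cs.wordProd_cons, cs.wordProd_cons, cs.simple_mul_simple_cancel_left]
        have h1 : cs.length (cs.wordProd (c :: c :: rest)) ≤ rest.length := by
          rw [hcalc]
          exact (cs.length_wordProd_le rest)
        have h2 := hred
        unfold CoxeterSystem.IsReduced at h2
        simp only [List.length_cons] at h2
        omega
      rcases ih hred' hmem' with h | h
      · -- c' :: rest = altWord a b n'
        have hhead : c' = a := by
          have hlen : (c' :: rest).length = rest.length + 1 := by simp
          rw [hlen, altWord_cons] at h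
          exact (List.cons.injEq _ _ _ _).mp h |>.1
        have hcb : c = b := by
          rcases hc with rfl | rfl
          · exact absurd hhead.symm hadj
          · rfl
        subst hcb
        right
        have hlen : (c :: c' :: rest).length = (c' :: rest).length + 1 := by simp
        rw [hlen, altWord_cons, ← h]
      · have hhead : c' = b := by
          have hlen : (c' :: rest).length = rest.length + 1 := by simp
          rw [hlen, altWord_cons] at h
          exact (List.cons.injEq _ _ _ _).mp h |>.1
        have hca : c = a := by
          rcases hc with rfl | rfl
          · rfl
          · exact absurd hhead.symm hadj
        subst hca
        left
        have hlen : (c :: c' :: rest).length = (c' :: rest).length + 1 := by simp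
        rw [hlen, altWord_cons, ← h]

lemma pow_yx_eq (a b : B) {n : ℕ} (hn : n ≤ M.M a b) :
    (cs.simple b * cs.simple a) ^ n = (cs.simple a * cs.simple b) ^ (M.M a b - n) := by
  have hinv : (cs.simple b * cs.simple a) = (cs.simple a * cs.simple b)⁻¹ := by
    rw [mul_inv_rev, cs.inv_simple, cs.inv_simple]
  have hpm : (cs.simple a * cs.simple b) ^ (M.M a b) = 1 := cs.simple_mul_simple_pow a b
  have hadd : (cs.simple a * cs.simple b) ^ n * (cs.simple a * cs.simple b) ^ (M.M a b - n)
      = 1 := by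
    rw [← pow_add]
    rw [Nat.add_sub_cancel' hn]
    exact hpm
  rw [hinv, inv_pow]
  exact inv_eq_of_mul_eq_one_right hadd

theorem length_wordProd_altWord (a b : B) (hab : a ≠ b) {k : ℕ} (hk : k ≤ M.M a b) :
    cs.length (cs.wordProd (altWord a b k)) = k := by
  by_contra hne
  obtain ⟨τ, hsub, hredτ, hπ⟩ := exists_reduced_sublist cs (altWord a b k)
  have hdlen : cs.length (cs.wordProd (altWord a b k)) = τ.length := by
    rw [← hπ]; exact hredτ
  have hlt : τ.length < k := by
    have h1 : cs.length (cs.wordProd (altWord a b k)) ≤ k := by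
      have := cs.length_wordProd_le (altWord a b k)
      rwa [altWord_length] at this
    omega
  have hpar : τ.length % 2 = k % 2 := by
    have := length_wordProd_mod_two cs (altWord a b k)
    rw [altWord_length, hdlen] at this
    exact this
  have hmem : ∀ x ∈ τ, x = a ∨ x = b := by
    intro x hx
    have hx2 := hsub.subset hx
    unfold altWord at hx2
    simp only [List.mem_map, List.mem_range] at hx2
    obtain ⟨u, _, hu⟩ := hx2
    by_cases h : u % 2 = 0
    · left; rw [← hu, if_pos h]
    · right; rw [← hu, if_neg h]
  have hm0 : 0 < M.M a b := by omega
  rcases reduced_two_letter_alternating cs a b τ hredτ hmem with hτ | hτ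
  · -- τ = altWord a b d
    have hππ : cs.wordProd (altWord a b k) = cs.wordProd (altWord a b τ.length) := by
      rw [← hπ]; exact congrArg cs.wordProd hτ
    rcases Nat.even_or_odd k with hke | hko
    · obtain ⟨u, hu⟩ : ∃ u, k = 2*u := by
        obtain ⟨u, hu⟩ := hke; exact ⟨u, by omega⟩
      obtain ⟨v, hv⟩ : ∃ v, τ.length = 2*v := by
        refine ⟨τ.length / 2, by omega⟩
      rw [hu, hv, wordProd_altWord_even, wordProd_altWord_even] at hππ
      have hcancel : (cs.simple a * cs.simple b) ^ (u - v) = 1 := by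
        have h1 : (cs.simple a * cs.simple b) ^ u
            = (cs.simple a * cs.simple b) ^ v * (cs.simple a * cs.simple b) ^ (u - v) := by
          rw [← pow_add]; congr 1; omega
        rw [h1] at hππ
        exact mul_left_cancel (hππ.trans (mul_one _).symm)
      exact pow_simple_mul_simple_ne_one cs hab (by omega) (by omega) hcancel
    · obtain ⟨u, hu⟩ := hko
      obtain ⟨v, hv⟩ : ∃ v, τ.length = 2*v+1 := by
        refine ⟨τ.length / 2, by omega⟩
      rw [hu, hv, wordProd_altWord_odd, wordProd_altWord_odd] at hππ
      have hππ' : (cs.simple a * cs.simple b) ^ u = (cs.simple a * cs.simple b) ^ v :=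
        mul_right_cancel hππ
      have hcancel : (cs.simple a * cs.simple b) ^ (u - v) = 1 := by
        have h1 : (cs.simple a * cs.simple b) ^ u
            = (cs.simple a * cs.simple b) ^ v * (cs.simple a * cs.simple b) ^ (u - v) := by
          rw [← pow_add]; congr 1; omega
        rw [h1] at hππ'
        exact mul_left_cancel (hππ'.trans (mul_one _).symm)
      exact pow_simple_mul_simple_ne_one cs hab (by omega) (by omega) hcancel
  · -- τ = altWord b a d
    have hππ : cs.wordProd (altWord a b k) = cs.wordProd (altWord b a τ.length) := by
      rw [← hπ]; exact congrArg cs.wordProd hτ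
    have hinv : (cs.simple b * cs.simple a) = (cs.simple a * cs.simple b)⁻¹ := by
      rw [mul_inv_rev, cs.inv_simple, cs.inv_simple]
    rcases Nat.even_or_odd k with hke | hko
    · obtain ⟨u, hu⟩ : ∃ u, k = 2*u := by
        obtain ⟨u, h⟩ := hke; exact ⟨u, by omega⟩
      obtain ⟨v, hv⟩ : ∃ v, τ.length = 2*v := ⟨τ.length / 2, by omega⟩
      rw [hu, hv, wordProd_altWord_even, wordProd_altWord_even] at hππ
      have hcancel : (cs.simple a * cs.simple b) ^ (u + v) = 1 := by
        rw [hinv, inv_pow] at hππ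
        rw [pow_add, hππ]
        simp
      exact pow_simple_mul_simple_ne_one cs hab (by omega) (by omega) hcancel
    · obtain ⟨u, hu⟩ := hko
      obtain ⟨v, hv⟩ : ∃ v, τ.length = 2*v+1 := ⟨τ.length / 2, by omega⟩
      rw [hu, hv, wordProd_altWord_odd, wordProd_altWord_odd] at hππ
      have hcancel : (cs.simple a * cs.simple b) ^ (u + v + 1) = 1 := by
        -- hππ : (ab)^u * a = (ba)^v * b
        have h1 : (cs.simple a * cs.simple b) ^ v * ((cs.simple a * cs.simple b) ^ u
            * cs.simple a) = cs.simple b := by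
          rw [hππ, hinv, inv_pow, ← mul_assoc, mul_inv_cancel, one_mul]
        have h2 : (cs.simple a * cs.simple b) ^ (u + v) * cs.simple a = cs.simple b := by
          rw [pow_add, pow_mul_comm, mul_assoc]
          exact h1
        have h3 : (cs.simple a * cs.simple b) ^ (u + v) * (cs.simple a * cs.simple b)
            = cs.simple b * cs.simple b := by
          rw [← mul_assoc, h2]
        rw [pow_succ, h3, cs.simple_mul_simple_self]
      exact pow_simple_mul_simple_ne_one cs hab (by omega) (by omega) hcancel

end AltWords

section RisAlt

attribute [local instance] Classical.propDecidable

variable {B W : Type*} [Group W] {M : CoxeterMatrix B} (cs : CoxeterSystem M W)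

lemma ris_altWord : ∀ (k : ℕ) (a b : B) (j : ℕ), j < k →
    (cs.rightInvSeq (altWord a b k)).getD j 1 =
      if k % 2 = 1 then (cs.simple a * cs.simple b)^(k-1-j) * cs.simple a
      else (cs.simple b * cs.simple a)^(k-1-j) * cs.simple b := by
  intro k
  induction k with
  | zero => intro a b j hj; omega
  | succ k ih =>
    intro a b j hj
    rw [altWord_cons]
    have hris : cs.rightInvSeq (a :: altWord b a k)
        = ((cs.wordProd (altWord b a k))⁻¹ * cs.simple a * cs.wordProd (altWord b a k))
          :: cs.rightInvSeq (altWord b a k) := rfl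
    rw [hris]
    cases j with
    | zero =>
      rw [List.getD_cons_zero]
      rcases Nat.even_or_odd k with ⟨e, he⟩ | ⟨e, he⟩
      · -- k = 2e
        have hk : k = 2*e := by omega
        have hmod : (k+1) % 2 = 1 := by omega
        rw [if_pos hmod]
        have hw : cs.wordProd (altWord b a k) = (cs.simple b * cs.simple a)^e := by
          rw [hk]; exact wordProd_altWord_even cs b a e
        have hwinv : (cs.wordProd (altWord b a k))⁻¹ = (cs.simple a * cs.simple b)^e := by
          rw [hw, ← inv_pow, mul_inv_rev, cs.inv_simple, cs.inv_simple]
        have hcomm : cs.simple a * (cs.simple b * cs.simple a)^e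
            = (cs.simple a * cs.simple b)^e * cs.simple a := simple_pow_comm cs b a e
        rw [hwinv, hw, mul_assoc, hcomm, ← mul_assoc, ← pow_add]
        congr 2
        omega
      · -- k = 2e+1
        have hk : k = 2*e+1 := he
        have hmod : (k+1) % 2 ≠ 1 := by omega
        rw [if_neg hmod]
        have hw : cs.wordProd (altWord b a k) = (cs.simple b * cs.simple a)^e * cs.simple b := by
          rw [hk]; exact wordProd_altWord_odd cs b a e
        have hwinv : (cs.wordProd (altWord b a k))⁻¹
            = cs.simple b * (cs.simple a * cs.simple b)^e := by
          rw [hw, mul_inv_rev, ← inv_pow, mul_inv_rev, cs.inv_simple, cs.inv_simple]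
        have hcomm : cs.simple a * (cs.simple b * cs.simple a)^e
            = (cs.simple a * cs.simple b)^e * cs.simple a := simple_pow_comm cs b a e
        have hcomm2 : cs.simple b * (cs.simple a * cs.simple b)^(k)
            = (cs.simple b * cs.simple a)^(k) * cs.simple b := simple_pow_comm cs a b k
        rw [hwinv, hw]
        calc cs.simple b * (cs.simple a * cs.simple b)^e * cs.simple a
              * ((cs.simple b * cs.simple a)^e * cs.simple b)
            = cs.simple b * ((cs.simple a * cs.simple b)^e
              * (cs.simple a * (cs.simple b * cs.simple a)^e) * cs.simple b) := by
              group
          _ = cs.simple b * ((cs.simple a * cs.simple b)^e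
              * ((cs.simple a * cs.simple b)^e * cs.simple a) * cs.simple b) := by rw [hcomm]
          _ = cs.simple b * (((cs.simple a * cs.simple b)^e * (cs.simple a * cs.simple b)^e)
              * (cs.simple a * cs.simple b)) := by group
          _ = cs.simple b * ((cs.simple a * cs.simple b)^(e+e)
              * (cs.simple a * cs.simple b)) := by rw [← pow_add]
          _ = cs.simple b * (cs.simple a * cs.simple b)^(e+e+1) := by rw [pow_succ]
          _ = cs.simple b * (cs.simple a * cs.simple b)^(k) := by
              have : e + e + 1 = k := by omega
              rw [this]
          _ = (cs.simple b * cs.simple a)^(k) * cs.simple b := hcomm2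
          _ = (cs.simple b * cs.simple a)^(k+1-1-0) * cs.simple b := by norm_num
    | succ j' =>
      rw [List.getD_cons_succ]
      rw [ih b a j' (by omega)]
      have harith : k - 1 - j' = (k+1) - 1 - (j'+1) := by omega
      by_cases hk2 : k % 2 = 1
      · have hk3 : (k+1) % 2 ≠ 1 := by omega
        rw [if_pos hk2, if_neg hk3, harith]
      · have hk3 : (k+1) % 2 = 1 := by omega
        rw [if_neg hk2, if_pos hk3, harith]

lemma length_pow_form (a b : B) (hab : a ≠ b) {n : ℕ} (h1 : 1 ≤ n) (h2 : n ≤ M.M a b - 2) :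
    cs.length ((cs.simple a * cs.simple b) ^ n * cs.simple a) ≠ 1 := by
  have hm : 2 ≤ M.M a b := by omega
  by_cases hc : 2*n+1 ≤ M.M a b
  · have : (cs.simple a * cs.simple b) ^ n * cs.simple a
        = cs.wordProd (altWord a b (2*n+1)) := (wordProd_altWord_odd cs a b n).symm
    rw [this, length_wordProd_altWord cs a b hab hc]
    omega
  · -- 2n+1 > m : rewrite as (ba)^(m-n-1) * b  word of length 2(m-n)-1
    have hmn : M.M a b - n ≤ n := by omega
    have heq : (cs.simple a * cs.simple b) ^ n = (cs.simple b * cs.simple a) ^ (M.M a b - n) := by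
      have := pow_yx_eq cs a b (n := M.M a b - n) (by omega)
      rw [this]
      congr 1
      omega
    obtain ⟨g, hg⟩ : ∃ g, M.M a b - n = g + 1 := ⟨M.M a b - n - 1, by omega⟩
    have heq2 : (cs.simple b * cs.simple a) ^ (M.M a b - n) * cs.simple a
        = (cs.simple b * cs.simple a) ^ g * cs.simple b := by
      rw [hg, pow_succ, mul_assoc, mul_assoc, cs.simple_mul_simple_self, mul_one]
    have heq3 : (cs.simple b * cs.simple a) ^ g * cs.simple b
        = cs.wordProd (altWord b a (2*g+1)) := (wordProd_altWord_odd cs b a g).symm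
    rw [heq, heq2, heq3]
    rw [length_wordProd_altWord cs b a (Ne.symm hab)
      (by rw [← M.symmetric a b]; omega)]
    omega

theorem descent_altWord (a b : B) (hab : a ≠ b) {k : ℕ} (hk1 : 1 ≤ k)
    (hkm : k ≤ M.M a b - 1) {i : B}
    (hd : cs.length (cs.wordProd (altWord a b k) * cs.simple i)
      < cs.length (cs.wordProd (altWord a b k))) :
    cs.wordProd (altWord a b k) * cs.simple i = cs.wordProd (altWord a b (k-1)) := by
  have hm : 2 ≤ M.M a b := by omega
  have hred : cs.IsReduced (altWord a b k) := by
    show cs.length (cs.wordProd (altWord a b k)) = (altWord a b k).length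
    rw [altWord_length]
    exact length_wordProd_altWord cs a b hab (by omega)
  have hmem := mem_rightInvSeq_of_descent cs hred hd
  obtain ⟨j, hj, hget⟩ := List.mem_iff_getElem.mp hmem
  rw [cs.length_rightInvSeq, altWord_length] at hj
  have hgetD : (cs.rightInvSeq (altWord a b k)).getD j 1 = cs.simple i := by
    rw [List.getD_eq_getElem _ 1 (by rw [cs.length_rightInvSeq, altWord_length]; exact hj)]
    exact hget
  by_cases hlast : j = k - 1
  · -- erase the last letter
    have h1 : cs.wordProd (altWord a b k) * cs.simple i
        = cs.wordProd ((altWord a b k).eraseIdx j) := by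
      rw [← hgetD]
      exact cs.wordProd_mul_getD_rightInvSeq _ j
    rw [h1, hlast]
    congr 1
    rw [List.eraseIdx_eq_take_drop_succ]
    have hdrop : (altWord a b k).drop (k-1+1) = [] := by
      apply List.drop_eq_nil_of_le
      rw [altWord_length]
      omega
    rw [hdrop, List.append_nil, altWord_take a b (by omega : k - 1 ≤ k)]
  · -- impossible : the reflection is too long
    exfalso
    have hform := ris_altWord cs k a b j hj
    rw [hgetD] at hform
    have hn1 : 1 ≤ k - 1 - j := by omega
    have hn2 : k - 1 - j ≤ M.M a b - 2 := by omega
    have hlengthi : cs.length (cs.simple i) = 1 := cs.length_simple i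
    by_cases hk2 : k % 2 = 1
    · rw [if_pos hk2] at hform
      have := length_pow_form cs a b hab hn1 hn2
      rw [← hform] at this
      exact this hlengthi
    · rw [if_neg hk2] at hform
      have := length_pow_form cs b a (Ne.symm hab) hn1
        (by rw [← M.symmetric a b]; omega)
      rw [← hform] at this
      exact this hlengthi

end RisAlt

section WeakOrder

variable {B W : Type*} [Group W] {M : CoxeterMatrix B} (cs : CoxeterSystem M W)

lemma weakLE_length_le {u w : W} (h : weakLE cs u w) : cs.length u ≤ cs.length w := by
  induction h with
  | refl => exact le_rfl
  | tail h1 h2 ih =>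
    obtain ⟨i, _, hlen⟩ := h2
    omega

lemma weakLE_eq_of_length {u w : W} (h : weakLE cs u w) (hl : cs.length u = cs.length w) :
    u = w := by
  induction h with
  | refl => rfl
  | tail h1 h2 ih =>
    exfalso
    obtain ⟨i, _, hlen⟩ := h2
    have := weakLE_length_le cs h1
    omega

lemma weakCov_of_step {u w : W} {i : B} (hw : w = u * cs.simple i)
    (hl : cs.length w = cs.length u + 1) : weakCov cs u w := by
  refine ⟨Relation.ReflTransGen.single ⟨i, hw, hl⟩, ?_, ?_⟩
  · intro h; rw [h] at hl; omega
  · intro v h1 h2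
    have l1 := weakLE_length_le cs h1
    have l2 := weakLE_length_le cs h2
    rcases Nat.lt_or_ge (cs.length v) (cs.length w) with hv | hv
    · left; exact (weakLE_eq_of_length cs h1 (by omega)).symm
    · right; exact weakLE_eq_of_length cs h2 (by omega)

lemma weakCov_structure {u w : W} (h : weakCov cs u w) :
    ∃ i : B, w = u * cs.simple i ∧ cs.length w = cs.length u + 1 := by
  obtain ⟨hle, hne, hmid⟩ := h
  rcases Relation.ReflTransGen.cases_head hle with rfl | ⟨v, hstep, hrest⟩
  · exact absurd rfl hne
  · obtain ⟨i, hv, hlen⟩ := hstep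
    rcases hmid v (Relation.ReflTransGen.single ⟨i, hv, hlen⟩) hrest with rfl | rfl
    · exfalso; omega
    · exact ⟨i, hv, hlen⟩

end WeakOrder

section Main

variable {B W : Type*} [Group W] {M : CoxeterMatrix B} (cs : CoxeterSystem M W)

lemma key_identity (r s : B) (hrs : r ≠ s) {l : ℕ} (hl2 : 2 ≤ l) (hlm : l ≤ M.M r s - 1)
    (hm : 3 ≤ M.M r s) :
    cs.wordProd (altWord s r (l-1)) * cs.wordProd (altWord r s (M.M r s)) =
      cs.wordProd (altWord r s (M.M r s - l + 1)) := by
  have hmsr : M.M s r = M.M r s := M.symmetric s r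
  have hpm : (cs.simple r * cs.simple s) ^ (M.M r s) = 1 := cs.simple_mul_simple_pow r s
  have hQP : ∀ n ≤ M.M r s, (cs.simple s * cs.simple r) ^ n
      = (cs.simple r * cs.simple s) ^ (M.M r s - n) := fun n hn => pow_yx_eq cs r s hn
  have hPy : cs.simple r * cs.simple s * cs.simple s = cs.simple r := by
    rw [mul_assoc, cs.simple_mul_simple_self, mul_one]
  rcases Nat.even_or_odd l with ⟨e', he'⟩ | ⟨e, he⟩
  · -- l even, l - 1 = 2e+1
    obtain ⟨e, he⟩ : ∃ e, l - 1 = 2*e + 1 := ⟨(l-2)/2, by omega⟩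
    have hγs : cs.wordProd (altWord s r (l-1))
        = (cs.simple s * cs.simple r) ^ e * cs.simple s := by
      rw [he]; exact wordProd_altWord_odd cs s r e
    rcases Nat.even_or_odd (M.M r s) with ⟨f', hf'⟩ | ⟨f, hf⟩
    · -- m even = 2f
      obtain ⟨f, hf⟩ : ∃ f, M.M r s = 2*f := ⟨f', by omega⟩
      have hwm : cs.wordProd (altWord r s (M.M r s)) = (cs.simple r * cs.simple s) ^ f := by
        rw [hf]; exact wordProd_altWord_even cs r s f
      obtain ⟨g, hg⟩ : ∃ g, M.M r s - l + 1 = 2*g+1 := ⟨(M.M r s - l)/2, by omega⟩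
      have htgt : cs.wordProd (altWord r s (M.M r s - l + 1))
          = (cs.simple r * cs.simple s) ^ g * cs.simple r := by
        rw [hg]; exact wordProd_altWord_odd cs r s g
      rw [hγs, hwm, htgt]
      have hcomm : cs.simple s * (cs.simple r * cs.simple s) ^ f
          = (cs.simple s * cs.simple r) ^ f * cs.simple s := simple_pow_comm cs r s f
      have hef : e + f ≤ M.M r s := by omega
      have hmef : M.M r s - (e + f) = g + 1 := by omega
      calc (cs.simple s * cs.simple r) ^ e * cs.simple s * (cs.simple r * cs.simple s) ^ f
          = (cs.simple s * cs.simple r) ^ e * ((cs.simple s * cs.simple r) ^ f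
              * cs.simple s) := by rw [mul_assoc, hcomm]
        _ = (cs.simple s * cs.simple r) ^ (e + f) * cs.simple s := by rw [← mul_assoc, ← pow_add]
        _ = (cs.simple r * cs.simple s) ^ (g+1) * cs.simple s := by rw [hQP _ hef, hmef]
        _ = (cs.simple r * cs.simple s) ^ g * cs.simple r := by
            rw [pow_succ, mul_assoc, hPy]
    · -- m odd = 2f+1
      have hwm : cs.wordProd (altWord r s (M.M r s))
          = (cs.simple r * cs.simple s) ^ f * cs.simple r := by
        rw [hf]; exact wordProd_altWord_odd cs r s f
      obtain ⟨g, hg⟩ : ∃ g, M.M r s - l + 1 = 2*g := ⟨(M.M r s - l + 1)/2, by omega⟩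
      have htgt : cs.wordProd (altWord r s (M.M r s - l + 1))
          = (cs.simple r * cs.simple s) ^ g := by
        rw [hg]; exact wordProd_altWord_even cs r s g
      rw [hγs, hwm, htgt]
      have hcomm : cs.simple s * (cs.simple r * cs.simple s) ^ f
          = (cs.simple s * cs.simple r) ^ f * cs.simple s := simple_pow_comm cs r s f
      have hef : e + f + 1 ≤ M.M r s := by omega
      have hmef : M.M r s - (e + f + 1) = g := by omega
      calc (cs.simple s * cs.simple r) ^ e * cs.simple s
            * ((cs.simple r * cs.simple s) ^ f * cs.simple r)
          = (cs.simple s * cs.simple r) ^ e * (cs.simple s * (cs.simple r * cs.simple s) ^ f)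
              * cs.simple r := by group
        _ = (cs.simple s * cs.simple r) ^ e * ((cs.simple s * cs.simple r) ^ f * cs.simple s)
              * cs.simple r := by rw [hcomm]
        _ = (cs.simple s * cs.simple r) ^ (e + f) * (cs.simple s * cs.simple r) := by
            rw [← mul_assoc, ← pow_add]; group
        _ = (cs.simple s * cs.simple r) ^ (e + f + 1) := by rw [pow_succ]
        _ = (cs.simple r * cs.simple s) ^ g := by rw [hQP _ hef, hmef]
  · -- l odd, l - 1 = 2e
    have he2 : l - 1 = 2*e := by omega
    have hγs : cs.wordProd (altWord s r (l-1)) = (cs.simple s * cs.simple r) ^ e := by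
      rw [he2]; exact wordProd_altWord_even cs s r e
    rcases Nat.even_or_odd (M.M r s) with ⟨f', hf'⟩ | ⟨f, hf⟩
    · obtain ⟨f, hf⟩ : ∃ f, M.M r s = 2*f := ⟨f', by omega⟩
      have hwm : cs.wordProd (altWord r s (M.M r s)) = (cs.simple r * cs.simple s) ^ f := by
        rw [hf]; exact wordProd_altWord_even cs r s f
      obtain ⟨g, hg⟩ : ∃ g, M.M r s - l + 1 = 2*g := ⟨(M.M r s - l + 1)/2, by omega⟩
      have htgt : cs.wordProd (altWord r s (M.M r s - l + 1))
          = (cs.simple r * cs.simple s) ^ g := by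
        rw [hg]; exact wordProd_altWord_even cs r s g
      rw [hγs, hwm, htgt]
      have hef : e ≤ M.M r s := by omega
      have hme : M.M r s - e + f = M.M r s + g := by omega
      calc (cs.simple s * cs.simple r) ^ e * (cs.simple r * cs.simple s) ^ f
          = (cs.simple r * cs.simple s) ^ (M.M r s - e) * (cs.simple r * cs.simple s) ^ f := by
            rw [hQP _ hef]
        _ = (cs.simple r * cs.simple s) ^ (M.M r s - e + f) := by rw [← pow_add]
        _ = (cs.simple r * cs.simple s) ^ (M.M r s) * (cs.simple r * cs.simple s) ^ g := by
            rw [← pow_add, hme]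
        _ = (cs.simple r * cs.simple s) ^ g := by rw [hpm, one_mul]
    · have hwm : cs.wordProd (altWord r s (M.M r s))
          = (cs.simple r * cs.simple s) ^ f * cs.simple r := by
        rw [hf]; exact wordProd_altWord_odd cs r s f
      obtain ⟨g, hg⟩ : ∃ g, M.M r s - l + 1 = 2*g+1 := ⟨(M.M r s - l)/2, by omega⟩
      have htgt : cs.wordProd (altWord r s (M.M r s - l + 1))
          = (cs.simple r * cs.simple s) ^ g * cs.simple r := by
        rw [hg]; exact wordProd_altWord_odd cs r s g
      rw [hγs, hwm, htgt]
      have hef : e ≤ M.M r s := by omega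
      have hme : M.M r s - e + f = M.M r s + g := by omega
      calc (cs.simple s * cs.simple r) ^ e * ((cs.simple r * cs.simple s) ^ f * cs.simple r)
          = (cs.simple r * cs.simple s) ^ (M.M r s - e) * (cs.simple r * cs.simple s) ^ f
              * cs.simple r := by rw [hQP _ hef]; group
        _ = (cs.simple r * cs.simple s) ^ (M.M r s + g) * cs.simple r := by
            rw [← pow_add, hme]
        _ = (cs.simple r * cs.simple s) ^ (M.M r s) * ((cs.simple r * cs.simple s) ^ g
              * cs.simple r) := by rw [pow_add]; group
        _ = (cs.simple r * cs.simple s) ^ g * cs.simple r := by rw [hpm, one_mul]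

end Main

end StmtTen

open StmtTen

/-- Let `(W,S)` be a finite Coxeter system, `r,s ∈ S` with
`m = m(r,s) ≥ 3`, and let `γ ∈ W_{r,s}` have reduced word `srs⋯` of length `l`
with `2 ≤ l ≤ m−1`, with `γ∗` the unique element covered by `γ` in weak order.
Then `γ' := γ∗ · (w₀)_{r,s}` is a join-irreducible with reduced word `rsr⋯`
of length `l(γ') = m − l + 1`. -/
theorem stmt_10 {B W : Type*} [Group W] [Finite W] {M : CoxeterMatrix B}
    (cs : CoxeterSystem M W) (r s : B) (hrs : r ≠ s) (hm : 3 ≤ M.M r s)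
    (l : ℕ) (hl2 : 2 ≤ l) (hlm : l ≤ M.M r s - 1)
    (γ γstar : W) (hγ : γ = cs.wordProd (altWord s r l)) (hred : cs.length γ = l)
    (hstar : weakCov cs γstar γ) (hstaru : ∀ u : W, weakCov cs u γ → u = γstar) :
    (∃! u : W, weakCov cs u (γstar * cs.wordProd (altWord r s (M.M r s)))) ∧
    γstar * cs.wordProd (altWord r s (M.M r s)) =
      cs.wordProd (altWord r s (M.M r s - l + 1)) ∧
    cs.length (γstar * cs.wordProd (altWord r s (M.M r s))) = M.M r s - l + 1 := by
  have hmsr : M.M s r = M.M r s := M.symmetric s r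
  -- Step 1 : identify γstar
  have hstar_len : cs.length (cs.wordProd (altWord s r (l-1))) = l - 1 :=
    length_wordProd_altWord cs s r (Ne.symm hrs) (by omega)
  have hsplit : γ = cs.wordProd (altWord s r (l-1))
      * cs.simple (if (l-1) % 2 = 0 then s else r) := by
    rw [hγ]
    have h1 : altWord s r l = altWord s r (l-1) ++ [if (l-1) % 2 = 0 then s else r] := by
      have h2 := altWord_succ' s r (l-1)
      have h3 : l - 1 + 1 = l := by omega
      rw [h3] at h2
      exact h2
    rw [h1, cs.wordProd_append, cs.wordProd_singleton]
  have hcov0 : weakCov cs (cs.wordProd (altWord s r (l-1))) γ :=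
    weakCov_of_step cs hsplit (by rw [hred, hstar_len]; omega)
  have hγstar : γstar = cs.wordProd (altWord s r (l-1)) := (hstaru _ hcov0).symm
  -- Step 2 : the identity
  have hkey : γstar * cs.wordProd (altWord r s (M.M r s))
      = cs.wordProd (altWord r s (M.M r s - l + 1)) := by
    rw [hγstar]
    exact key_identity cs r s hrs hl2 hlm hm
  -- Step 3 : the length
  have hlen' : cs.length (cs.wordProd (altWord r s (M.M r s - l + 1))) = M.M r s - l + 1 :=
    length_wordProd_altWord cs r s hrs (by omega)
  refine ⟨?_, hkey, by rw [hkey, hlen']⟩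
  rw [hkey]
  -- Step 4 : unique cover below γ'
  have hk2 : 2 ≤ M.M r s - l + 1 := by omega
  have hulen : cs.length (cs.wordProd (altWord r s (M.M r s - l + 1 - 1)))
      = M.M r s - l + 1 - 1 :=
    length_wordProd_altWord cs r s hrs (by omega)
  have hsplit' : cs.wordProd (altWord r s (M.M r s - l + 1))
      = cs.wordProd (altWord r s (M.M r s - l + 1 - 1))
        * cs.simple (if (M.M r s - l + 1 - 1) % 2 = 0 then r else s) := by
    have h1 : altWord r s (M.M r s - l + 1) = altWord r s (M.M r s - l + 1 - 1)
        ++ [if (M.M r s - l + 1 - 1) % 2 = 0 then r else s] := by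
      have h2 := altWord_succ' r s (M.M r s - l + 1 - 1)
      have h3 : M.M r s - l + 1 - 1 + 1 = M.M r s - l + 1 := by omega
      rw [h3] at h2
      exact h2
    rw [h1, cs.wordProd_append, cs.wordProd_singleton]
  refine ⟨cs.wordProd (altWord r s (M.M r s - l + 1 - 1)),
    weakCov_of_step cs hsplit' (by rw [hlen', hulen]; omega), ?_⟩
  intro u hu
  obtain ⟨i, hieq, hilen⟩ := weakCov_structure cs hu
  have hueq : u = cs.wordProd (altWord r s (M.M r s - l + 1)) * cs.simple i := by
    rw [hieq, mul_assoc, cs.simple_mul_simple_self, mul_one]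
  have hdesc : cs.length (cs.wordProd (altWord r s (M.M r s - l + 1)) * cs.simple i)
      < cs.length (cs.wordProd (altWord r s (M.M r s - l + 1))) := by
    rw [← hueq]
    omega
  have hfinal := descent_altWord cs r s hrs (by omega : 1 ≤ M.M r s - l + 1)
    (by omega : M.M r s - l + 1 ≤ M.M r s - 1) hdesc
  rw [hueq, hfinal]
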